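/- Let V be a d×n real matrix with columns v_1,…,v_n, let C = VᵀV, and let s be an integer with 1 ≤ s ≤ d. For every subset S ⊆ {1,…,n} with |S| = s such that the vectors {v_i}_{i∈S} are linearly independent, one has Γ_s(∑_{i∈S} v_i v_iᵀ) = log det^s(∑_{i∈S} v_i v_iᵀ) = log det(C_{S,S}). (Hence the maximum entropy sampling problem is equivalent to maximizing Γ_s(∑_i x_i v_i v_iᵀ) over binary x with ∑_i x_i = s.) -/

import Mathlib

open Matrix Finset

noncomputable section

/-- `lam` lists the eigenvalues (with multiplicity) of the real symmetric matrix `X`,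
via an orthogonal spectral decomposition. -/
def IsSpectralDecomp {m : Type*} [Fintype m] [DecidableEq m]
    (X : Matrix m m ℝ) (lam : m → ℝ) : Prop :=
  ∃ Q : Matrix m m ℝ, Q * Qᵀ = 1 ∧ X = Q * Matrix.diagonal lam * Qᵀ

/-- Principal submatrix `C_{S,S}`. -/
def subSub {n : ℕ} (C : Matrix (Fin n) (Fin n) ℝ) (S : Finset (Fin n)) :
    Matrix {i // i ∈ S} {i // i ∈ S} ℝ :=
  Matrix.of fun a b => C a.1 b.1

/-- The value `λ_{i+1}` (1-based), i.e. the coordinate of `lam` of 0-based index `i`;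
`0` when out of range. -/
def extVal {d : ℕ} (lam : Fin d → ℝ) : ℕ → ℝ :=
  fun i => if h : i < d then lam ⟨i, h⟩ else 0

/-- `∑_{i=k+1}^d λ_i` (1-based), i.e. the sum of the coordinates of 0-based index `≥ k`. -/
def tailSum {d : ℕ} (lam : Fin d → ℝ) (k : ℕ) : ℝ :=
  ∑ i ∈ Finset.univ.filter (fun i : Fin d => k ≤ (i : ℕ)), lam i

/-- `k = k(λ, s)`: an integer `0 ≤ k < s` with
`λ_k > (1/(s-k)) ∑_{i=k+1}^d λ_i ≥ λ_{k+1}`, with the convention `λ₀ = +∞`. -/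
def IsKIndex {d : ℕ} (lam : Fin d → ℝ) (s k : ℕ) : Prop :=
  k < s ∧ extVal lam k ≤ tailSum lam k / ((s : ℝ) - k) ∧
    (k = 0 ∨ tailSum lam k / ((s : ℝ) - k) < extVal lam (k - 1))

/-- `P` is the Moore–Penrose pseudoinverse of `X`. -/
def IsPseudoInv {d : ℕ} (X P : Matrix (Fin d) (Fin d) ℝ) : Prop :=
  X * P * X = X ∧ P * X * P = P ∧ (X * P)ᵀ = X * P ∧ (P * X)ᵀ = P * X

private lemma card_filter_lt_fin (d m : ℕ) (h : m ≤ d) :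
    (Finset.univ.filter fun j : Fin d => (j : ℕ) < m).card = m := by
  have : (Finset.univ.filter fun j : Fin d => (j : ℕ) < m)
      = (Finset.univ : Finset (Fin m)).map (Fin.castLEEmb h) := by
    ext j
    simp only [Finset.mem_filter, Finset.mem_univ, true_and, Finset.mem_map,
      Fin.castLEEmb_apply]
    constructor
    · intro hj
      exact ⟨⟨(j : ℕ), hj⟩, by ext; rfl⟩
    · rintro ⟨b, rfl⟩
      exact b.2
  rw [this, Finset.card_map, Finset.card_univ, Fintype.card_fin]

/-- For a size-`s` subset `S` whose columns `{vᵢ}_{i∈S}` are linearly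
independent, `Γ_s(∑_{i∈S} vᵢvᵢᵀ) = log det^s(∑_{i∈S} vᵢvᵢᵀ) = log det(C_{S,S})`. -/
theorem stmt_6 (d n s : ℕ) (hs1 : 1 ≤ s) (hsd : s ≤ d)
    (V : Matrix (Fin d) (Fin n) ℝ) (S : Finset (Fin n)) (hS : S.card = s)
    (hlin : LinearIndependent ℝ (fun i : {x // x ∈ S} => (fun a => V a i.1)))
    (lam : Fin d → ℝ) (hsort : Antitone lam) (hnn : ∀ i, 0 ≤ lam i)
    (hdecomp : IsSpectralDecomp
      (∑ i ∈ S, vecMulVec (fun a => V a i) (fun a => V a i)) lam)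
    (k : ℕ) (hk : IsKIndex lam s k) :
    Real.log (∏ i ∈ Finset.univ.filter (fun i : Fin d => (i : ℕ) < k), lam i)
        + ((s : ℝ) - k) * Real.log (tailSum lam k / ((s : ℝ) - k))
      = Real.log (∏ i ∈ Finset.univ.filter (fun i : Fin d => (i : ℕ) < s), lam i) ∧
    Real.log (∏ i ∈ Finset.univ.filter (fun i : Fin d => (i : ℕ) < s), lam i)
      = Real.log (subSub (Vᵀ * V) S).det := by
  classical
  obtain ⟨Q, hQ, hX⟩ := hdecomp
  set A : Matrix (Fin d) {x // x ∈ S} ℝ := Matrix.of (fun a (i : {x // x ∈ S}) => V a i.1)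
    with hAdef
  have hXA : (∑ i ∈ S, vecMulVec (fun a => V a i) (fun a => V a i)) = A * Aᵀ := by
    ext a b
    simp only [Matrix.sum_apply, vecMulVec_apply, mul_apply, transpose_apply, hAdef,
      Matrix.of_apply]
    exact (Finset.sum_coe_sort S (fun i => V a i * V b i)).symm
  rw [hXA] at hX
  have hCA : subSub (Vᵀ * V) S = Aᵀ * A := by
    ext a b
    simp [subSub, mul_apply, transpose_apply, hAdef]
  have hrankA : A.rank = s := by
    rw [Matrix.rank_eq_finrank_span_cols]
    have : Set.range A.col = Set.range (fun i : {x // x ∈ S} => (fun a => V a i.1)) := rfl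
    rw [this, finrank_span_eq_card hlin, Fintype.card_coe, hS]
  have hdetQ : IsUnit Q.det := by
    apply IsUnit.of_mul_eq_one Qᵀ.det
    rw [← det_mul, hQ, det_one]
  have hdetQT : IsUnit Qᵀ.det := by rwa [det_transpose]
  have hdet1 : Q.det * Qᵀ.det = 1 := by rw [← det_mul, hQ, det_one]
  -- count of nonzero eigenvalues is s
  have hcount : (Finset.univ.filter fun i : Fin d => lam i ≠ 0).card = s := by
    have h1 : (A * Aᵀ).rank = s := by rw [Matrix.rank_self_mul_transpose, hrankA]
    have h2 : (A * Aᵀ).rank = (Matrix.diagonal lam).rank := by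
      rw [hX, Matrix.rank_mul_eq_left_of_isUnit_det Qᵀ _ hdetQT,
        Matrix.rank_mul_eq_right_of_isUnit_det Q _ hdetQ]
    rw [h1, Matrix.rank_diagonal] at h2
    rw [← Fintype.card_subtype]
    omega
  have hpos : ∀ i : Fin d, (i : ℕ) < s → 0 < lam i := by
    intro i hi
    rcases lt_or_eq_of_le (hnn i) with h | h
    · exact h
    · exfalso
      have hsub : (Finset.univ.filter fun j : Fin d => lam j ≠ 0) ⊆
          Finset.univ.filter fun j : Fin d => (j : ℕ) < (i : ℕ) := by
        intro j hj
        rw [Finset.mem_filter] at hj ⊢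
        refine ⟨Finset.mem_univ _, ?_⟩
        by_contra hc
        exact hj.2 (le_antisymm (h ▸ hsort (by omega : i ≤ j)) (hnn j))
      have := Finset.card_le_card hsub
      rw [hcount, card_filter_lt_fin d i (le_of_lt i.2)] at this
      omega
  have hzero : ∀ i : Fin d, s ≤ (i : ℕ) → lam i = 0 := by
    have hMN : (Finset.univ.filter fun j : Fin d => (j : ℕ) < s) ⊆
        Finset.univ.filter fun j : Fin d => lam j ≠ 0 := by
      intro j hj
      rw [Finset.mem_filter] at hj ⊢
      exact ⟨Finset.mem_univ _, ne_of_gt (hpos j hj.2)⟩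
    have heq := Finset.eq_of_subset_of_card_le hMN
      (by rw [hcount, card_filter_lt_fin d s hsd])
    intro i hi
    by_contra hc
    have : i ∈ Finset.univ.filter fun j : Fin d => lam j ≠ 0 :=
      Finset.mem_filter.mpr ⟨Finset.mem_univ _, hc⟩
    rw [← heq, Finset.mem_filter] at this
    omega
  -- Part 1 setup
  have hks : k < s := hk.1
  have hkd : k < d := lt_of_lt_of_le hks hsd
  set κ : Fin d := ⟨k, hkd⟩ with hκ
  have hsk : (0 : ℝ) < (s : ℝ) - k := by
    have : (k : ℝ) < (s : ℝ) := by exact_mod_cast hks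
    linarith
  have hcast : ((s - k : ℕ) : ℝ) = (s : ℝ) - k := by
    push_cast [Nat.cast_sub hks.le]; ring
  set T := Finset.univ.filter (fun i : Fin d => k ≤ (i : ℕ) ∧ (i : ℕ) < s) with hT
  have hTsum : tailSum lam k = ∑ i ∈ T, lam i := by
    rw [tailSum]
    refine (Finset.sum_subset ?_ ?_).symm
    · intro i hi
      simp only [hT, Finset.mem_filter] at hi ⊢
      exact ⟨hi.1, hi.2.1⟩
    · intro i hi hni
      simp only [hT, Finset.mem_filter, Finset.mem_univ, true_and, not_and, not_lt] at hi hni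
      exact hzero i (hni hi)
  have hcardT : T.card = s - k := by
    have h1 : T = (Finset.univ.filter fun i : Fin d => (i : ℕ) < s)
        \ (Finset.univ.filter fun i : Fin d => (i : ℕ) < k) := by
      ext i
      simp only [hT, Finset.mem_filter, Finset.mem_sdiff, Finset.mem_univ, true_and]
      omega
    rw [h1, Finset.card_sdiff_of_subset (by
        intro i hi
        simp only [Finset.mem_filter, Finset.mem_univ, true_and] at hi ⊢
        omega),
      card_filter_lt_fin d s hsd, card_filter_lt_fin d k hkd.le]
  have hub : ∀ i ∈ T, lam i ≤ lam κ := by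
    intro i hi
    simp only [hT, Finset.mem_filter] at hi
    exact hsort (by rw [Fin.le_def]; exact hi.2.1)
  have hEx : extVal lam k = lam κ := by rw [extVal]; exact dif_pos hkd
  have hsumEq : ∑ i ∈ T, lam i = ∑ _i ∈ T, lam κ := by
    refine le_antisymm (Finset.sum_le_sum hub) ?_
    rw [Finset.sum_const, nsmul_eq_mul, hcardT, hcast]
    have h2 := hk.2.1
    rw [hEx, hTsum] at h2
    calc ((s : ℝ) - k) * lam κ ≤ ((s : ℝ) - k) * (( ∑ i ∈ T, lam i) / ((s : ℝ) - k)) := by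
          exact mul_le_mul_of_nonneg_left h2 hsk.le
      _ = ∑ i ∈ T, lam i := by field_simp
  have heqT : ∀ i ∈ T, lam i = lam κ :=
    (Finset.sum_eq_sum_iff_of_le hub).mp hsumEq
  have havg : tailSum lam k / ((s : ℝ) - k) = lam κ := by
    rw [hTsum, hsumEq, Finset.sum_const, nsmul_eq_mul, hcardT, hcast]
    field_simp
  -- product split
  have hdisj : Disjoint (Finset.univ.filter fun i : Fin d => (i : ℕ) < k) T := by
    rw [Finset.disjoint_left]
    intro i hi hiT
    simp only [hT, Finset.mem_filter, Finset.mem_univ, true_and] at hi hiT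
    omega
  have hun : (Finset.univ.filter fun i : Fin d => (i : ℕ) < s)
      = (Finset.univ.filter fun i : Fin d => (i : ℕ) < k) ∪ T := by
    ext i
    simp only [hT, Finset.mem_filter, Finset.mem_union, Finset.mem_univ, true_and]
    omega
  have hsplitP : (∏ i ∈ Finset.univ.filter fun i : Fin d => (i : ℕ) < s, lam i)
      = (∏ i ∈ Finset.univ.filter fun i : Fin d => (i : ℕ) < k, lam i) * ∏ i ∈ T, lam i := by
    rw [hun, Finset.prod_union hdisj]
  have hprodT : ∏ i ∈ T, lam i = lam κ ^ (s - k) := by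
    rw [Finset.prod_congr rfl heqT, Finset.prod_const, hcardT]
  have hκpos : 0 < lam κ := hpos κ hks
  have hP1 : 0 < ∏ i ∈ Finset.univ.filter fun i : Fin d => (i : ℕ) < k, lam i := by
    refine Finset.prod_pos ?_
    intro i hi
    simp only [Finset.mem_filter, Finset.mem_univ, true_and] at hi
    exact hpos i (by omega)
  constructor
  · rw [havg, hsplitP, hprodT, Real.log_mul hP1.ne' (by positivity), Real.log_pow, hcast]
  -- Part 2
  · have hcards : Fintype.card {x // x ∈ S} = s := by rw [Fintype.card_coe, hS]
    have key : ∀ t : ℝ, t ≠ 0 →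
        (t • (1 : Matrix {x // x ∈ S} {x // x ∈ S} ℝ) - Aᵀ * A).det
          = ∏ i ∈ Finset.univ.filter fun i : Fin d => (i : ℕ) < s, (t - lam i) := by
      intro t ht
      have e1 : t • (1 : Matrix {x // x ∈ S} {x // x ∈ S} ℝ) - Aᵀ * A
          = t • ((1 : Matrix {x // x ∈ S} {x // x ∈ S} ℝ) + (-t⁻¹) • (Aᵀ * A)) := by
        rw [smul_add, smul_smul, mul_neg, mul_inv_cancel₀ ht, neg_smul, one_smul,
          sub_eq_add_neg]
      have e2 : t • (1 : Matrix (Fin d) (Fin d) ℝ) - A * Aᵀ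
          = t • ((1 : Matrix (Fin d) (Fin d) ℝ) + (-t⁻¹) • (A * Aᵀ)) := by
        rw [smul_add, smul_smul, mul_neg, mul_inv_cancel₀ ht, neg_smul, one_smul,
          sub_eq_add_neg]
      have e3 : ((1 : Matrix {x // x ∈ S} {x // x ∈ S} ℝ) + (-t⁻¹) • (Aᵀ * A)).det
          = ((1 : Matrix (Fin d) (Fin d) ℝ) + (-t⁻¹) • (A * Aᵀ)).det := by
        rw [← Matrix.mul_smul, det_one_add_mul_comm, Matrix.smul_mul]
      have e4 : (t • (1 : Matrix (Fin d) (Fin d) ℝ) - A * Aᵀ).det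
          = ∏ i : Fin d, (t - lam i) := by
        have hconj : t • (1 : Matrix (Fin d) (Fin d) ℝ) - A * Aᵀ
            = Q * Matrix.diagonal (fun i => t - lam i) * Qᵀ := by
          have h1 : t • (1 : Matrix (Fin d) (Fin d) ℝ)
              = Q * (t • (1 : Matrix (Fin d) (Fin d) ℝ)) * Qᵀ := by
            rw [Matrix.mul_smul, Matrix.mul_one, Matrix.smul_mul, hQ]
          rw [hX]
          conv_lhs => rw [h1]
          rw [← Matrix.sub_mul, ← Matrix.mul_sub, Matrix.smul_one_eq_diagonal,
            Matrix.diagonal_sub]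
        rw [hconj, det_mul, det_mul, det_diagonal, mul_right_comm, hdet1, one_mul]
      have e5 : ∏ i : Fin d, (t - lam i)
          = (∏ i ∈ Finset.univ.filter fun i : Fin d => (i : ℕ) < s, (t - lam i))
            * t ^ (d - s) := by
        rw [← Finset.prod_filter_mul_prod_filter_not Finset.univ
          (fun i : Fin d => (i : ℕ) < s) (fun i => t - lam i)]
        congr 1
        have hcc : (Finset.univ.filter fun i : Fin d => ¬ (i : ℕ) < s).card = d - s := by
          have h2 := Finset.card_filter_add_card_filter_not
            (s := (Finset.univ : Finset (Fin d))) (p := fun i : Fin d => (i : ℕ) < s)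
          rw [card_filter_lt_fin d s hsd, Finset.card_univ, Fintype.card_fin] at h2
          omega
        rw [Finset.prod_congr rfl (fun i hi => by
            simp only [Finset.mem_filter, Finset.mem_univ, true_and, not_lt] at hi
            rw [hzero i hi, sub_zero]),
          Finset.prod_const, hcc]
      have hDd : t ^ d * ((1 : Matrix (Fin d) (Fin d) ℝ) + (-t⁻¹) • (A * Aᵀ)).det
          = (∏ i ∈ Finset.univ.filter fun i : Fin d => (i : ℕ) < s, (t - lam i))
            * t ^ (d - s) := by
        rw [← e5, ← e4, e2, det_smul, Fintype.card_fin]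
      have htd : (t : ℝ) ^ (d - s) ≠ 0 := pow_ne_zero _ ht
      apply mul_left_cancel₀ htd
      rw [e1, det_smul, hcards, e3, ← mul_assoc, ← pow_add,
        (by omega : d - s + s = d), hDd]
      ring
    have hfin : (fun t : ℝ => (t • (1 : Matrix {x // x ∈ S} {x // x ∈ S} ℝ) - Aᵀ * A).det)
        = (fun t : ℝ =>
            ∏ i ∈ Finset.univ.filter fun i : Fin d => (i : ℕ) < s, (t - lam i)) := by
      apply Continuous.ext_on (dense_compl_singleton (0 : ℝ))
      · exact ((continuous_id.smul continuous_const).sub continuous_const).matrix_det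
      · exact continuous_finset_prod _ (fun i _ => continuous_id.sub continuous_const)
      · intro t ht
        exact key t ht
    have h0 := congrFun hfin 0
    simp only [zero_smul, zero_sub] at h0
    rw [det_neg, hcards] at h0
    have hRHS : (∏ i ∈ Finset.univ.filter fun i : Fin d => (i : ℕ) < s, (-lam i))
        = (-1 : ℝ) ^ s * ∏ i ∈ Finset.univ.filter fun i : Fin d => (i : ℕ) < s, lam i := by
      calc (∏ i ∈ Finset.univ.filter fun i : Fin d => (i : ℕ) < s, (-lam i))
          = ∏ i ∈ Finset.univ.filter fun i : Fin d => (i : ℕ) < s, ((-1 : ℝ) * lam i) := by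
            refine Finset.prod_congr rfl ?_
            intros; ring
        _ = (∏ _i ∈ Finset.univ.filter fun i : Fin d => (i : ℕ) < s, (-1 : ℝ))
            * ∏ i ∈ Finset.univ.filter fun i : Fin d => (i : ℕ) < s, lam i :=
            Finset.prod_mul_distrib
        _ = (-1 : ℝ) ^ s * ∏ i ∈ Finset.univ.filter fun i : Fin d => (i : ℕ) < s, lam i := by
            rw [Finset.prod_const, card_filter_lt_fin d s hsd]
    rw [hRHS] at h0
    have hdetAA : (Aᵀ * A).det
        = ∏ i ∈ Finset.univ.filter fun i : Fin d => (i : ℕ) < s, lam i :=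
      mul_left_cancel₀ (pow_ne_zero s (by norm_num : (-1 : ℝ) ≠ 0)) h0
    rw [hCA, hdetAA]
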